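/- Let 0 < q < 1 and let x be a real number with |x| < 1. Then e_q(x) · E_q(-x) = 1, i.e. (Σ_{k=0}^∞ x^k / ((1-q)(1-q^2)⋯(1-q^k))) · (Σ_{k=0}^∞ q^{k(k-1)/2} (-x)^k / ((1-q)(1-q^2)⋯(1-q^k))) = 1. -/

import Mathlib

open Finset Filter

namespace QExpAux

noncomputable def P (q : ℝ) (k : ℕ) : ℝ := ∏ i ∈ Finset.range k, (1 - q ^ (i + 1))

variable {q : ℝ}

lemma P_pos (hq0 : 0 < q) (hq1 : q < 1) (k : ℕ) : 0 < P q k := by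
  refine Finset.prod_pos fun i _ => ?_
  have : q ^ (i + 1) < 1 := pow_lt_one₀ hq0.le hq1 (Nat.succ_ne_zero i)
  linarith

lemma P_succ (k : ℕ) : P q (k + 1) = P q k * (1 - q ^ (k + 1)) := by
  simp [P, Finset.prod_range_succ]

lemma factor_pos (hq0 : 0 < q) (hq1 : q < 1) (k : ℕ) : 0 < 1 - q ^ (k + 1) := by
  have : q ^ (k + 1) < 1 := pow_lt_one₀ hq0.le hq1 (Nat.succ_ne_zero k)
  linarith

/-- Summability of the `e_q` series. -/
lemma summable_e (hq0 : 0 < q) (hq1 : q < 1) {y : ℝ} (hy : |y| < 1) :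
    Summable fun k : ℕ => y ^ k / P q k := by
  set r : ℝ := (1 + |y|) / 2 with hr
  have hy0 : 0 ≤ |y| := abs_nonneg y
  have hr1 : r < 1 := by rw [hr]; linarith
  have hyr : |y| < r := by rw [hr]; linarith
  have hr0 : 0 < r := by rw [hr]; linarith
  refine summable_of_ratio_norm_eventually_le hr1 ?_
  have hq : Tendsto (fun k : ℕ => q ^ (k + 1)) atTop (nhds 0) :=
    (tendsto_pow_atTop_nhds_zero_of_lt_one hq0.le hq1).comp (tendsto_add_atTop_nat 1)
  have hev : ∀ᶠ k : ℕ in atTop, q ^ (k + 1) < 1 - |y| / r := by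
    refine hq.eventually (eventually_lt_nhds ?_)
    have : |y| / r < 1 := (div_lt_one hr0).mpr hyr
    linarith
  filter_upwards [hev] with k hk
  have hPk := P_pos hq0 hq1 k
  have hfk := factor_pos hq0 hq1 k
  have hyr' : |y| / r < 1 - q ^ (k + 1) := by linarith
  rw [P_succ]
  have h1 : ‖y ^ (k + 1) / (P q k * (1 - q ^ (k + 1)))‖ =
      (|y| / (1 - q ^ (k + 1))) * (|y| ^ k / P q k) := by
    rw [norm_div, norm_pow, Real.norm_eq_abs, Real.norm_eq_abs, pow_succ,
      abs_of_pos (mul_pos hPk hfk)]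
    field_simp
  have h2 : ‖y ^ k / P q k‖ = |y| ^ k / P q k := by
    rw [norm_div, norm_pow, Real.norm_eq_abs, Real.norm_eq_abs, abs_of_pos hPk]
  rw [h1, h2]
  have hle : |y| / (1 - q ^ (k + 1)) ≤ r := by
    rw [div_le_iff₀ hfk]
    calc |y| = (|y| / r) * r := by field_simp
    _ ≤ (1 - q ^ (k + 1)) * r := by nlinarith
    _ = r * (1 - q ^ (k + 1)) := by ring
  have : (0:ℝ) ≤ |y| ^ k / P q k := by positivity
  nlinarith

/-- Summability of the `E_q` series. -/
lemma summable_E (hq0 : 0 < q) (hq1 : q < 1) {y : ℝ} (hy : |y| < 1) :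
    Summable fun k : ℕ => q ^ (k * (k - 1) / 2) * y ^ k / P q k := by
  refine Summable.of_norm_bounded ((summable_e hq0 hq1 hy).abs) fun k => ?_
  have hqpow : |q ^ (k * (k - 1) / 2)| ≤ 1 := by
    rw [abs_of_pos (pow_pos hq0 _)]
    exact pow_le_one₀ hq0.le hq1.le
  have h : ‖q ^ (k * (k - 1) / 2) * y ^ k / P q k‖ =
      |q ^ (k * (k - 1) / 2)| * |y ^ k / P q k| := by
    rw [Real.norm_eq_abs, mul_div_assoc, abs_mul]
  rw [h]
  have h2 : (0:ℝ) ≤ |y ^ k / P q k| := abs_nonneg _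
  nlinarith

lemma nat_tri (k : ℕ) : (k + 1) * ((k + 1) - 1) / 2 = k * (k - 1) / 2 + k := by
  cases k with
  | zero => rfl
  | succ k =>
    have h : (k + 1 + 1) * (k + 1 + 1 - 1) = (k + 1) * k + 2 * (k + 1) := by
      simp only [Nat.add_sub_cancel]
      ring
    rw [h, Nat.add_mul_div_left _ _ (by norm_num : (0:ℕ) < 2)]
    simp

/-- Functional equation for `e_q`: `e_q(y) * (1 - y) = e_q(qy)`. -/
lemma e_funEq (hq0 : 0 < q) (hq1 : q < 1) {y : ℝ} (hy : |y| < 1) :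
    (∑' k : ℕ, y ^ k / P q k) * (1 - y) = ∑' k : ℕ, (q * y) ^ k / P q k := by
  have hqy : |q * y| < 1 := by
    rw [abs_mul, abs_of_pos hq0]
    nlinarith [abs_nonneg y]
  have hS := summable_e hq0 hq1 hy
  have hSq := summable_e hq0 hq1 hqy
  have hsub : Summable fun k : ℕ => (y ^ k - (q * y) ^ k) / P q k := by
    refine (hS.sub hSq).congr fun k => ?_
    rw [sub_div]
  have h1 : (∑' k : ℕ, y ^ k / P q k) - (∑' k : ℕ, (q * y) ^ k / P q k)
      = ∑' k : ℕ, (y ^ k - (q * y) ^ k) / P q k := by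
    rw [← hS.tsum_sub hSq]
    exact tsum_congr fun k => (sub_div _ _ _).symm
  have h2 : (∑' k : ℕ, (y ^ k - (q * y) ^ k) / P q k)
      = y * ∑' k : ℕ, y ^ k / P q k := by
    rw [hsub.tsum_eq_zero_add]
    simp only [pow_zero, sub_self, zero_div, zero_add]
    rw [← tsum_mul_left]
    refine tsum_congr fun k => ?_
    have hPk := (P_pos hq0 hq1 k).ne'
    have hfk := (factor_pos hq0 hq1 k).ne'
    rw [P_succ, mul_pow]
    field_simp
    ring
  have h3 := h1.trans h2
  linear_combination h3

/-- Functional equation for `E_q`: `E_q(y) = (1 + y) * E_q(qy)`. -/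
lemma E_funEq (hq0 : 0 < q) (hq1 : q < 1) {y : ℝ} (hy : |y| < 1) :
    (∑' k : ℕ, q ^ (k * (k - 1) / 2) * y ^ k / P q k)
      = (1 + y) * ∑' k : ℕ, q ^ (k * (k - 1) / 2) * (q * y) ^ k / P q k := by
  have hqy : |q * y| < 1 := by
    rw [abs_mul, abs_of_pos hq0]
    nlinarith [abs_nonneg y]
  have hT := summable_E hq0 hq1 hy
  have hTq := summable_E hq0 hq1 hqy
  have hsub : Summable fun k : ℕ =>
      q ^ (k * (k - 1) / 2) * (y ^ k - (q * y) ^ k) / P q k := by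
    refine (hT.sub hTq).congr fun k => ?_
    rw [mul_sub, sub_div]
  have h1 : (∑' k : ℕ, q ^ (k * (k - 1) / 2) * y ^ k / P q k)
      - (∑' k : ℕ, q ^ (k * (k - 1) / 2) * (q * y) ^ k / P q k)
      = ∑' k : ℕ, q ^ (k * (k - 1) / 2) * (y ^ k - (q * y) ^ k) / P q k := by
    rw [← hT.tsum_sub hTq]
    refine tsum_congr fun k => ?_
    rw [mul_sub, sub_div]
  have h2 : (∑' k : ℕ, q ^ (k * (k - 1) / 2) * (y ^ k - (q * y) ^ k) / P q k)
      = y * ∑' k : ℕ, q ^ (k * (k - 1) / 2) * (q * y) ^ k / P q k := by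
    rw [hsub.tsum_eq_zero_add]
    simp only [pow_zero, sub_self, mul_zero, zero_div, zero_add]
    rw [← tsum_mul_left]
    refine tsum_congr fun k => ?_
    have hPk := (P_pos hq0 hq1 k).ne'
    have hfk := (factor_pos hq0 hq1 k).ne'
    rw [P_succ, nat_tri, pow_add, mul_pow]
    field_simp
    ring
  have h3 := h1.trans h2
  linear_combination h3

/-- `e_q(q^n x) → 1` as `n → ∞`. -/
lemma tendsto_e (hq0 : 0 < q) (hq1 : q < 1) {x : ℝ} (hx : |x| < 1) :
    Tendsto (fun n : ℕ => ∑' k : ℕ, (q ^ n * x) ^ k / P q k) atTop (nhds 1) := by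
  have hbd : Summable fun k : ℕ => |x| ^ k / P q k :=
    summable_e hq0 hq1 (y := |x|) (by rwa [abs_abs])
  have key : Tendsto (fun n : ℕ => ∑' k : ℕ, (q ^ n * x) ^ k / P q k) atTop
      (nhds (∑' k : ℕ, if k = 0 then (1:ℝ) else 0)) := by
    refine tendsto_tsum_of_dominated_convergence (f := fun n k => (q ^ n * x) ^ k / P q k)
      (bound := fun k => |x| ^ k / P q k) hbd ?_ ?_
    · intro k
      cases k with
      | zero => simpa [P] using tendsto_const_nhds
      | succ k =>
        simp only [Nat.succ_ne_zero, if_false]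
        have h1 : Tendsto (fun n : ℕ => (q ^ (k + 1)) ^ n) atTop (nhds 0) :=
          tendsto_pow_atTop_nhds_zero_of_lt_one (pow_pos hq0 _).le
            (pow_lt_one₀ hq0.le hq1 (Nat.succ_ne_zero k))
        have heq : ∀ n : ℕ, (q ^ n * x) ^ (k + 1) / P q (k + 1)
            = (q ^ (k + 1)) ^ n * (x ^ (k + 1) / P q (k + 1)) := by
          intro n
          rw [mul_pow, ← pow_mul, ← pow_mul, Nat.mul_comm]
          ring
        simp only [heq]
        simpa using h1.mul_const (x ^ (k + 1) / P q (k + 1))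
    · refine Eventually.of_forall fun n => fun k => ?_
      have hPk := P_pos hq0 hq1 k
      have hqn : |q ^ n| ≤ 1 := by
        rw [abs_of_pos (pow_pos hq0 n)]
        exact pow_le_one₀ hq0.le hq1.le
      rw [norm_div, norm_pow, Real.norm_eq_abs, Real.norm_eq_abs, abs_of_pos hPk,
        abs_mul]
      have h1 : |q ^ n| * |x| ≤ |x| := by nlinarith [abs_nonneg x]
      have h2 : (|q ^ n| * |x|) ^ k ≤ |x| ^ k :=
        pow_le_pow_left₀ (by positivity) h1 k
      exact (div_le_div_iff_of_pos_right hPk).mpr h2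
  simpa [tsum_ite_eq] using key

/-- `E_q(q^n x) → 1` as `n → ∞`. -/
lemma tendsto_E (hq0 : 0 < q) (hq1 : q < 1) {x : ℝ} (hx : |x| < 1) :
    Tendsto (fun n : ℕ => ∑' k : ℕ, q ^ (k * (k - 1) / 2) * (q ^ n * x) ^ k / P q k)
      atTop (nhds 1) := by
  have hbd : Summable fun k : ℕ => |x| ^ k / P q k :=
    summable_e hq0 hq1 (y := |x|) (by rwa [abs_abs])
  have key : Tendsto
      (fun n : ℕ => ∑' k : ℕ, q ^ (k * (k - 1) / 2) * (q ^ n * x) ^ k / P q k) atTop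
      (nhds (∑' k : ℕ, if k = 0 then (1:ℝ) else 0)) := by
    refine tendsto_tsum_of_dominated_convergence
      (f := fun n k => q ^ (k * (k - 1) / 2) * (q ^ n * x) ^ k / P q k)
      (bound := fun k => |x| ^ k / P q k) hbd ?_ ?_
    · intro k
      cases k with
      | zero => simpa [P] using tendsto_const_nhds
      | succ k =>
        simp only [Nat.succ_ne_zero, if_false]
        have h1 : Tendsto (fun n : ℕ => (q ^ (k + 1)) ^ n) atTop (nhds 0) :=
          tendsto_pow_atTop_nhds_zero_of_lt_one (pow_pos hq0 _).le
            (pow_lt_one₀ hq0.le hq1 (Nat.succ_ne_zero k))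
        have heq : ∀ n : ℕ, q ^ ((k+1) * ((k+1) - 1) / 2) * (q ^ n * x) ^ (k + 1) / P q (k + 1)
            = (q ^ (k + 1)) ^ n *
              (q ^ ((k+1) * ((k+1) - 1) / 2) * x ^ (k + 1) / P q (k + 1)) := by
          intro n
          rw [mul_pow, ← pow_mul, ← pow_mul, Nat.mul_comm]
          ring
        simp only [heq]
        simpa using h1.mul_const
          (q ^ ((k+1) * ((k+1) - 1) / 2) * x ^ (k + 1) / P q (k + 1))
    · refine Eventually.of_forall fun n => fun k => ?_
      have hPk := P_pos hq0 hq1 k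
      have hqn : |q ^ n| ≤ 1 := by
        rw [abs_of_pos (pow_pos hq0 n)]
        exact pow_le_one₀ hq0.le hq1.le
      have hqc : |q ^ (k * (k - 1) / 2)| ≤ 1 := by
        rw [abs_of_pos (pow_pos hq0 _)]
        exact pow_le_one₀ hq0.le hq1.le
      rw [Real.norm_eq_abs, abs_div, abs_of_pos hPk, abs_mul, abs_pow (q ^ n * x) k, abs_mul (q ^ n) x]
      have h1 : |q ^ n| * |x| ≤ |x| := by nlinarith [abs_nonneg x]
      have h2 : (|q ^ n| * |x|) ^ k ≤ |x| ^ k :=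
        pow_le_pow_left₀ (by positivity) h1 k
      have h3 : |q ^ (k * (k - 1) / 2)| * (|q ^ n| * |x|) ^ k ≤ |x| ^ k := by
        nlinarith [pow_nonneg (mul_nonneg (abs_nonneg (q ^ n)) (abs_nonneg x)) k,
          abs_nonneg (q ^ (k * (k - 1) / 2))]
      exact (div_le_div_iff_of_pos_right hPk).mpr h3
  simpa [tsum_ite_eq] using key

end QExpAux

open QExpAux

/-- `e_q(x) · E_q(-x) = 1` for `0 < q < 1` and `|x| < 1`, where
`e_q(x) = Σ_{k=0}^∞ x^k / ((1-q)(1-q^2)⋯(1-q^k))` and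
`E_q(x) = Σ_{k=0}^∞ q^{k(k-1)/2} x^k / ((1-q)(1-q^2)⋯(1-q^k))`. -/
theorem qExp_mul_qExpE_neg (q : ℝ) (hq0 : 0 < q) (hq1 : q < 1)
    (x : ℝ) (hx : |x| < 1) :
    (∑' k : ℕ, x ^ k / ∏ i ∈ Finset.range k, (1 - q ^ (i + 1))) *
      (∑' k : ℕ,
        q ^ (k * (k - 1) / 2) * (-x) ^ k / ∏ i ∈ Finset.range k, (1 - q ^ (i + 1))) = 1 := by
  have hq1' : q ≤ 1 := hq1.le
  have habs : ∀ n : ℕ, |q ^ n * x| < 1 := by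
    intro n
    rw [abs_mul, abs_of_pos (pow_pos hq0 n)]
    have hqn : q ^ n ≤ 1 := pow_le_one₀ hq0.le hq1.le
    nlinarith [abs_nonneg x, pow_pos hq0 n]
  have habs' : ∀ n : ℕ, |q ^ n * (-x)| < 1 := by
    intro n
    have := habs n
    rwa [abs_mul, abs_neg, ← abs_mul]
  -- the product is constant along n ↦ q^n x
  have step : ∀ n : ℕ,
      (∑' k : ℕ, (q ^ n * x) ^ k / P q k) *
        (∑' k : ℕ, q ^ (k * (k - 1) / 2) * (q ^ n * (-x)) ^ k / P q k)
      = (∑' k : ℕ, (q ^ (n+1) * x) ^ k / P q k) *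
        (∑' k : ℕ, q ^ (k * (k - 1) / 2) * (q ^ (n+1) * (-x)) ^ k / P q k) := by
    intro n
    have he := e_funEq hq0 hq1 (habs n)
    have hE := E_funEq hq0 hq1 (habs' n)
    have hq1e : q * (q ^ n * x) = q ^ (n+1) * x := by ring
    have hq1E : q * (q ^ n * (-x)) = q ^ (n+1) * (-x) := by ring
    rw [hq1e] at he
    rw [hq1E] at hE
    calc (∑' k : ℕ, (q ^ n * x) ^ k / P q k) *
          (∑' k : ℕ, q ^ (k * (k - 1) / 2) * (q ^ n * (-x)) ^ k / P q k)
        = (∑' k : ℕ, (q ^ n * x) ^ k / P q k) *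
          ((1 + q ^ n * (-x)) *
            ∑' k : ℕ, q ^ (k * (k - 1) / 2) * (q ^ (n+1) * (-x)) ^ k / P q k) := by
          rw [← hE]
      _ = ((∑' k : ℕ, (q ^ n * x) ^ k / P q k) * (1 - q ^ n * x)) *
          (∑' k : ℕ, q ^ (k * (k - 1) / 2) * (q ^ (n+1) * (-x)) ^ k / P q k) := by
          ring
      _ = (∑' k : ℕ, (q ^ (n+1) * x) ^ k / P q k) *
          (∑' k : ℕ, q ^ (k * (k - 1) / 2) * (q ^ (n+1) * (-x)) ^ k / P q k) := by
          rw [he]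
  have const : ∀ n : ℕ,
      (∑' k : ℕ, x ^ k / P q k) *
        (∑' k : ℕ, q ^ (k * (k - 1) / 2) * (-x) ^ k / P q k)
      = (∑' k : ℕ, (q ^ n * x) ^ k / P q k) *
        (∑' k : ℕ, q ^ (k * (k - 1) / 2) * (q ^ n * (-x)) ^ k / P q k) := by
    intro n
    induction n with
    | zero => simp
    | succ n ih => rw [ih, step n]
  have hlim : Tendsto (fun n : ℕ =>
      (∑' k : ℕ, (q ^ n * x) ^ k / P q k) *
        (∑' k : ℕ, q ^ (k * (k - 1) / 2) * (q ^ n * (-x)) ^ k / P q k))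
      atTop (nhds 1) := by
    have h1 := tendsto_e hq0 hq1 hx
    have h2 := tendsto_E hq0 hq1 (x := -x) (by rwa [abs_neg])
    simpa using h1.mul h2
  have hconst : Tendsto (fun n : ℕ =>
      (∑' k : ℕ, (q ^ n * x) ^ k / P q k) *
        (∑' k : ℕ, q ^ (k * (k - 1) / 2) * (q ^ n * (-x)) ^ k / P q k))
      atTop (nhds ((∑' k : ℕ, x ^ k / P q k) *
        (∑' k : ℕ, q ^ (k * (k - 1) / 2) * (-x) ^ k / P q k))) := by
    have : (fun n : ℕ =>
        (∑' k : ℕ, (q ^ n * x) ^ k / P q k) *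
          (∑' k : ℕ, q ^ (k * (k - 1) / 2) * (q ^ n * (-x)) ^ k / P q k))
        = fun _ : ℕ => (∑' k : ℕ, x ^ k / P q k) *
          (∑' k : ℕ, q ^ (k * (k - 1) / 2) * (-x) ^ k / P q k) := by
      funext n
      exact (const n).symm
    rw [this]
    exact tendsto_const_nhds
  have hmain : (∑' k : ℕ, x ^ k / P q k) *
      (∑' k : ℕ, q ^ (k * (k - 1) / 2) * (-x) ^ k / P q k) = 1 :=
    tendsto_nhds_unique hconst hlim
  simpa [P] using hmain
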